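/- Let (X, Y) be a random pair in ℝ^d × ℝ with P(X = 0) = 0, where ℝ^d and ℝ^{d+1} carry norms ‖·‖ such that the canonical basis vectors have norm one and ‖(x, 0)‖ = ‖x‖ for all x ∈ ℝ^d. Assume |Y| ≤ M almost surely, t ↦ P(‖X‖ > t) is regularly varying with index α > 0, and the conditional law of (t⁻¹X, Y) given ‖X‖ > t converges weakly, as t → ∞, to a probability distribution P_∞ on {(x, y) : ‖x‖ > 1}. Define Z = Y‖X‖. Then the random vector (X, Z) is regularly varying in ℝ^{d+1}: the conditional law of t⁻¹(X, Z) given ‖(X, Z)‖ > t converges weakly, as t → ∞, to a probability distribution supported on {(x, z) : ‖(x, z)‖ > 1}. -/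

import Mathlib

open MeasureTheory ProbabilityTheory Filter Set
open scoped ENNReal Topology

/-- Weak convergence, as `t → ∞`, of a family of (finite) measures to a limit measure,
tested against bounded continuous functions. -/
def TendstoWeakly {E : Type*} [MeasurableSpace E] [TopologicalSpace E]
    (μ : ℝ → Measure E) (ν : Measure E) : Prop :=
  ∀ f : BoundedContinuousFunction E ℝ,
    Filter.Tendsto (fun t => ∫ x, f x ∂(μ t)) Filter.atTop (𝓝 (∫ x, f x ∂ν))

/-- `N` is a norm function on the real vector space `E`. -/
def IsNormFun {E : Type*} [AddCommGroup E] [Module ℝ E] (N : E → ℝ) : Prop :=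
  (∀ x y, N (x + y) ≤ N x + N y) ∧ (∀ (c : ℝ) x, N (c • x) = |c| * N x) ∧
    (∀ x, x ≠ 0 → 0 < N x)

/-- The survival function of (the real random variable) `R` is regularly varying with
index `α`:  `P(R > tx)/P(R > t) → x^{-α}` for all `x > 0`. -/
def SurvivalRegVarying {Ω : Type*} [MeasureSpace Ω] (R : Ω → ℝ) (α : ℝ) : Prop :=
  ∀ x : ℝ, 0 < x → Filter.Tendsto
    (fun t => (ℙ {ω | t * x < R ω}).toReal / (ℙ {ω | t < R ω}).toReal)
    Filter.atTop (𝓝 (x ^ (-α)))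


namespace RTaux

variable {E : Type*} [AddCommGroup E] [Module ℝ E] {N : E → ℝ}

lemma normFun_zero (h : IsNormFun N) : N 0 = 0 := by
  have := h.2.1 0 0
  simpa using this

lemma normFun_neg (h : IsNormFun N) (x : E) : N (-x) = N x := by
  have := h.2.1 (-1) x
  simpa using this

lemma normFun_nonneg (h : IsNormFun N) (x : E) : 0 ≤ N x := by
  have h1 := h.1 x (-x)
  rw [add_neg_cancel, normFun_zero h, normFun_neg h] at h1
  linarith

lemma normFun_sub_le (h : IsNormFun N) (x y : E) : N x - N y ≤ N (x - y) := by
  have h1 := h.1 (x - y) y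
  rw [sub_add_cancel] at h1
  linarith

lemma normFun_abs_sub_le (h : IsNormFun N) (x y : E) : |N x - N y| ≤ N (x - y) := by
  rw [abs_sub_le_iff]
  refine ⟨normFun_sub_le h x y, ?_⟩
  have h2 := normFun_sub_le h y x
  have h3 : N (y - x) = N (x - y) := by
    rw [← normFun_neg h (y - x), neg_sub]
  linarith

lemma normFun_sum_le {ι : Type*} (h : IsNormFun N) (s : Finset ι) (f : ι → E) :
    N (∑ i ∈ s, f i) ≤ ∑ i ∈ s, N (f i) := by
  classical
  induction s using Finset.cons_induction with
  | empty => simp [normFun_zero h]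
  | cons a s ha ih =>
    rw [Finset.sum_cons, Finset.sum_cons]
    exact le_trans (h.1 _ _) (by linarith)

end RTaux

namespace RTaux2
open RTaux

variable {d : ℕ}

lemma nd_le_sum {Nd : (Fin d → ℝ) → ℝ} (h : IsNormFun Nd)
    (hbasis : ∀ i, Nd (Pi.single i 1) = 1) (x : Fin d → ℝ) :
    Nd x ≤ ∑ i, |x i| := by
  have hx : x = ∑ i, Pi.single i (x i) := by
    rw [Finset.univ_sum_single]
  calc Nd x = Nd (∑ i, Pi.single i (x i)) := by rw [← hx]
    _ ≤ ∑ i, Nd (Pi.single i (x i)) := normFun_sum_le h _ _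
    _ = ∑ i, |x i| := by
        refine Finset.sum_congr rfl fun i _ => ?_
        have : Pi.single i (x i) = (x i) • (Pi.single i 1 : Fin d → ℝ) := by
          rw [← Pi.single_smul, smul_eq_mul, mul_one]
        rw [this, h.2.1, hbasis i, mul_one]

lemma nd_le_card_norm {Nd : (Fin d → ℝ) → ℝ} (h : IsNormFun Nd)
    (hbasis : ∀ i, Nd (Pi.single i 1) = 1) (x : Fin d → ℝ) :
    Nd x ≤ d * ‖x‖ := by
  calc Nd x ≤ ∑ i, |x i| := nd_le_sum h hbasis x
    _ ≤ ∑ _i : Fin d, ‖x‖ := by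
        refine Finset.sum_le_sum fun i _ => ?_
        simpa using norm_le_pi_norm x i
    _ = d * ‖x‖ := by simp [Finset.sum_const, nsmul_eq_mul]

lemma nd_continuous {Nd : (Fin d → ℝ) → ℝ} (h : IsNormFun Nd)
    (hbasis : ∀ i, Nd (Pi.single i 1) = 1) : Continuous Nd := by
  refine (LipschitzWith.of_dist_le_mul (K := d) fun x y => ?_).continuous
  rw [Real.dist_eq, dist_eq_norm]
  push_cast
  calc |Nd x - Nd y| ≤ Nd (x - y) := normFun_abs_sub_le h x y
    _ ≤ d * ‖x - y‖ := nd_le_card_norm h hbasis _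

lemma n1_zero_right {N1 : ((Fin d → ℝ) × ℝ) → ℝ}
    (h1 : IsNormFun N1) (hbasis1 : N1 (0, 1) = 1) (z : ℝ) :
    N1 (0, z) = |z| := by
  have : ((0 : Fin d → ℝ), z) = z • ((0 : Fin d → ℝ), (1:ℝ)) := by
    simp [Prod.smul_mk]
  rw [this, h1.2.1, hbasis1, mul_one]

lemma n1_le {Nd : (Fin d → ℝ) → ℝ} {N1 : ((Fin d → ℝ) × ℝ) → ℝ}
    (h1 : IsNormFun N1) (hbasis1 : N1 (0, 1) = 1)
    (hcompat : ∀ x, N1 (x, 0) = Nd x) (x : Fin d → ℝ) (z : ℝ) :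
    N1 (x, z) ≤ Nd x + |z| := by
  have : ((x : Fin d → ℝ), z) = ((x, 0) : (Fin d → ℝ) × ℝ) + (0, z) := by simp
  rw [this]
  refine le_trans (h1.1 _ _) ?_
  rw [hcompat, n1_zero_right h1 hbasis1]

lemma n1_continuous {Nd : (Fin d → ℝ) → ℝ} {N1 : ((Fin d → ℝ) × ℝ) → ℝ}
    (h : IsNormFun Nd) (hbasis : ∀ i, Nd (Pi.single i 1) = 1)
    (h1 : IsNormFun N1) (hbasis1 : N1 (0, 1) = 1)
    (hcompat : ∀ x, N1 (x, 0) = Nd x) : Continuous N1 := by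
  refine (LipschitzWith.of_dist_le_mul (K := d + 1) fun p q => ?_).continuous
  rw [Real.dist_eq, dist_eq_norm]
  push_cast
  calc |N1 p - N1 q| ≤ N1 (p - q) := normFun_abs_sub_le h1 p q
    _ ≤ Nd (p.1 - q.1) + |p.2 - q.2| := n1_le h1 hbasis1 hcompat _ _
    _ ≤ d * ‖p.1 - q.1‖ + ‖p.2 - q.2‖ := by
        have := nd_le_card_norm h hbasis (p.1 - q.1)
        have h2 : |p.2 - q.2| = ‖p.2 - q.2‖ := rfl
        linarith [this]
    _ ≤ d * ‖p - q‖ + ‖p - q‖ := by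
        have h1' : ‖p.1 - q.1‖ ≤ ‖p - q‖ := norm_fst_le (p - q)
        have h2' : ‖p.2 - q.2‖ ≤ ‖p - q‖ := norm_snd_le (p - q)
        have hd : (0:ℝ) ≤ d := Nat.cast_nonneg d
        nlinarith
    _ = (d + 1) * ‖p - q‖ := by ring

lemma n1_lower {N1 : ((Fin d → ℝ) × ℝ) → ℝ} (h1 : IsNormFun N1)
    (hc : Continuous N1) :
    ∃ c : ℝ, 0 < c ∧ ∀ q : (Fin d → ℝ) × ℝ, c * ‖q‖ ≤ N1 q := by
  have hsc : IsCompact (Metric.sphere (0 : (Fin d → ℝ) × ℝ) 1) := isCompact_sphere 0 1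
  have hne : (Metric.sphere (0 : (Fin d → ℝ) × ℝ) 1).Nonempty := by
    refine ⟨((0 : Fin d → ℝ), (1:ℝ)), ?_⟩
    simp [Prod.norm_def]
  obtain ⟨q₀, hq₀mem, hq₀min⟩ := hsc.exists_isMinOn hne hc.continuousOn
  have hq₀ne : q₀ ≠ 0 := by
    intro h
    rw [mem_sphere_iff_norm] at hq₀mem
    simp [h] at hq₀mem
  refine ⟨N1 q₀, h1.2.2 _ hq₀ne, fun q => ?_⟩
  rcases eq_or_ne q 0 with rfl | hq
  · simp [normFun_zero h1]
  · have hnq : 0 < ‖q‖ := norm_pos_iff.mpr hq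
    have hmem : ‖q‖⁻¹ • q ∈ Metric.sphere (0 : (Fin d → ℝ) × ℝ) 1 := by
      rw [mem_sphere_iff_norm, sub_zero, norm_smul]
      simp [abs_of_pos hnq, inv_mul_cancel₀ hnq.ne']
    have hmin := hq₀min hmem
    simp only [Set.mem_setOf_eq] at hmin
    have h2 : N1 (‖q‖⁻¹ • q) = ‖q‖⁻¹ * N1 q := by
      rw [h1.2.1, abs_of_pos (by positivity)]
    rw [h2] at hmin
    have h3 : ‖q‖ * N1 q₀ ≤ ‖q‖ * (‖q‖⁻¹ * N1 q) :=
      mul_le_mul_of_nonneg_left hmin hnq.le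
    calc N1 q₀ * ‖q‖ = ‖q‖ * N1 q₀ := by ring
      _ ≤ ‖q‖ * (‖q‖⁻¹ * N1 q) := h3
      _ = N1 q := by field_simp

end RTaux2

namespace RTaux3

variable {E : Type*} [MeasurableSpace E] [TopologicalSpace E] [OpensMeasurableSpace E]

/-- A continuous "ramp" function built from `ψ`. -/
noncomputable def bump (ψ : E → ℝ) (hψ : Continuous ψ) (a δ : ℝ) :
    BoundedContinuousFunction E ℝ where
  toFun := fun q => min 1 (max 0 ((ψ q - a) / δ))
  continuous_toFun := by fun_prop
  map_bounded' := by
    refine ⟨1, fun x y => ?_⟩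
    rw [Real.dist_eq, abs_sub_le_iff]
    have h1 := min_le_left 1 (max 0 ((ψ x - a) / δ))
    have h2 := le_min (α := ℝ) one_pos.le (le_max_left 0 ((ψ x - a) / δ))
    have h3 := min_le_left 1 (max 0 ((ψ y - a) / δ))
    have h4 := le_min (α := ℝ) one_pos.le (le_max_left 0 ((ψ y - a) / δ))
    constructor <;> linarith

lemma bump_nonneg (ψ : E → ℝ) (hψ : Continuous ψ) (a δ : ℝ) (q : E) :
    0 ≤ bump ψ hψ a δ q :=
  le_min one_pos.le (le_max_left _ _)

lemma bump_le_one (ψ : E → ℝ) (hψ : Continuous ψ) (a δ : ℝ) (q : E) :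
    bump ψ hψ a δ q ≤ 1 := min_le_left _ _

lemma bump_eq_one (ψ : E → ℝ) (hψ : Continuous ψ) (a δ : ℝ) (hδ : 0 < δ) (q : E)
    (h : a + δ ≤ ψ q) : bump ψ hψ a δ q = 1 := by
  have h1 : (1:ℝ) ≤ (ψ q - a) / δ := by
    rw [le_div_iff₀ hδ]; linarith
  have : max 0 ((ψ q - a) / δ) = (ψ q - a) / δ := max_eq_right (by linarith)
  show min 1 (max 0 ((ψ q - a) / δ)) = 1
  rw [this, min_eq_left h1]

lemma bump_eq_zero (ψ : E → ℝ) (hψ : Continuous ψ) (a δ : ℝ) (hδ : 0 < δ) (q : E)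
    (h : ψ q ≤ a) : bump ψ hψ a δ q = 0 := by
  have h1 : (ψ q - a) / δ ≤ 0 := div_nonpos_of_nonpos_of_nonneg (by linarith) hδ.le
  show min 1 (max 0 ((ψ q - a) / δ)) = 0
  rw [max_eq_left h1, min_eq_right one_pos.le]

end RTaux3

namespace RTaux4
open RTaux3 BoundedContinuousFunction

variable {E : Type*} [MeasurableSpace E] [TopologicalSpace E] [OpensMeasurableSpace E]

lemma claimA_nonneg (μ : ℝ → Measure E) (ν : Measure E) [IsFiniteMeasure ν]
    (hfin : ∀ t, IsProbabilityMeasure (μ t)) (hw : TendstoWeakly μ ν)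
    (ψ : E → ℝ) (hψ : Continuous ψ) (lam : ℝ)
    (hatom : ν {q | ψ q = lam} = 0)
    (g : BoundedContinuousFunction E ℝ) (hg : ∀ q, 0 ≤ g q) :
    Tendsto (fun t => ∫ q, ({q | lam < ψ q}).indicator (fun q => g q) q ∂(μ t)) atTop
      (𝓝 (∫ q, ({q | lam < ψ q}).indicator (fun q => g q) q ∂ν)) := by
  have hA : MeasurableSet {q | lam < ψ q} :=
    measurableSet_lt measurable_const hψ.measurable
  set A := {q | lam < ψ q} with hAdef
  set I := ∫ q, A.indicator (fun q => g q) q ∂ν with hI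
  -- strips
  set Sp : ℝ → Set E := fun δ => {q | lam - δ < ψ q ∧ ψ q ≤ lam} with hSp
  set Sm : ℝ → Set E := fun δ => {q | lam < ψ q ∧ ψ q < lam + δ} with hSm
  have hSpm : ∀ δ, MeasurableSet (Sp δ) := fun δ =>
    (measurableSet_lt measurable_const hψ.measurable).inter
      (measurableSet_le hψ.measurable measurable_const)
  have hSmm : ∀ δ, MeasurableSet (Sm δ) := fun δ =>
    (measurableSet_lt measurable_const hψ.measurable).inter
      (measurableSet_lt hψ.measurable measurable_const)
  -- ν-measure of shrinking strips tends to 0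
  have hSp0 : Tendsto (fun n : ℕ => ν (Sp (1 / (n + 1)))) atTop (𝓝 0) := by
    have h1 : Tendsto (fun n : ℕ => ν (Sp (1 / (n + 1)))) atTop
        (𝓝 (ν (⋂ n : ℕ, Sp (1 / (n + 1))))) := by
      refine tendsto_measure_iInter_atTop
        (fun n => (hSpm _).nullMeasurableSet) ?_ ⟨0, measure_ne_top ν _⟩
      intro m n hmn q hq
      have hle : (1:ℝ) / (n + 1) ≤ 1 / (m + 1) := by
        apply one_div_le_one_div_of_le (by positivity)
        exact_mod_cast by omega
      exact ⟨by linarith [hq.1], hq.2⟩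
    have h2 : (⋂ n : ℕ, Sp (1 / (n + 1))) = {q | ψ q = lam} := by
      ext q
      simp only [Set.mem_iInter, Set.mem_setOf_eq, hSp]
      constructor
      · intro h
        have hub : ∀ n : ℕ, lam - 1 / (n + 1) < ψ q := fun n => (h n).1
        have hle : lam ≤ ψ q := by
          by_contra hlt
          push_neg at hlt
          obtain ⟨n, hn⟩ := exists_nat_one_div_lt (sub_pos.mpr hlt)
          have := hub n
          linarith
        exact le_antisymm (h 0).2 hle
      · intro h n
        constructor
        · rw [h]; have : (0:ℝ) < 1 / (n + 1) := by positivity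
          linarith
        · exact le_of_eq h
    rw [h2, hatom] at h1
    exact h1
  have hSm0 : Tendsto (fun n : ℕ => ν (Sm (1 / (n + 1)))) atTop (𝓝 0) := by
    have h1 : Tendsto (fun n : ℕ => ν (Sm (1 / (n + 1)))) atTop
        (𝓝 (ν (⋂ n : ℕ, Sm (1 / (n + 1))))) := by
      refine tendsto_measure_iInter_atTop
        (fun n => (hSmm _).nullMeasurableSet) ?_ ⟨0, measure_ne_top ν _⟩
      intro m n hmn q hq
      have hle : (1:ℝ) / (n + 1) ≤ 1 / (m + 1) := by
        apply one_div_le_one_div_of_le (by positivity)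
        exact_mod_cast by omega
      exact ⟨hq.1, by linarith [hq.2]⟩
    have h2 : (⋂ n : ℕ, Sm (1 / (n + 1))) = ∅ := by
      ext q
      simp only [Set.mem_iInter, Set.mem_setOf_eq, hSm, Set.mem_empty_iff_false,
        iff_false]
      intro h
      have hub : ∀ n : ℕ, ψ q < lam + 1 / (n + 1) := fun n => (h n).2
      have hle : ψ q ≤ lam := by
        by_contra hlt
        push_neg at hlt
        obtain ⟨n, hn⟩ := exists_nat_one_div_lt (sub_pos.mpr hlt)
        have := hub n
        linarith
      exact absurd (h 0).1 (not_lt.mpr hle)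
    rw [h2] at h1
    simpa using h1
  rw [Metric.tendsto_nhds]
  intro ε hε
  -- choose δ = 1/(n+1) making the strips small
  have hGnn : (0:ℝ) ≤ ‖g‖ := norm_nonneg g
  have hsmall : ∀ᶠ n : ℕ in atTop,
      ‖g‖ * (ν (Sp (1 / (n + 1)))).toReal < ε / 4 ∧
      ‖g‖ * (ν (Sm (1 / (n + 1)))).toReal < ε / 4 := by
    have hp : Tendsto (fun n : ℕ => ‖g‖ * (ν (Sp (1 / (n + 1)))).toReal) atTop (𝓝 0) := by
      have := (ENNReal.tendsto_toReal (a := 0) (by simp)).comp hSp0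
      simpa using this.const_mul ‖g‖
    have hm : Tendsto (fun n : ℕ => ‖g‖ * (ν (Sm (1 / (n + 1)))).toReal) atTop (𝓝 0) := by
      have := (ENNReal.tendsto_toReal (a := 0) (by simp)).comp hSm0
      simpa using this.const_mul ‖g‖
    filter_upwards [hp.eventually (eventually_lt_nhds (by positivity : (0:ℝ) < ε/4)),
      hm.eventually (eventually_lt_nhds (by positivity : (0:ℝ) < ε/4))] with n h1 h2
    exact ⟨h1, h2⟩
  obtain ⟨n, hn⟩ := hsmall.exists
  set δ : ℝ := 1 / (n + 1) with hδdef
  have hδ : 0 < δ := by positivity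
  set χp := g * bump ψ hψ (lam - δ) δ with hχp
  set χm := g * bump ψ hψ lam δ with hχm
  -- pointwise inequalities
  have I1 : ∀ q, A.indicator (fun q => g q) q ≤ χp q := by
    intro q
    by_cases hq : q ∈ A
    · rw [Set.indicator_of_mem hq]
      have h1 : bump ψ hψ (lam - δ) δ q = 1 :=
        bump_eq_one ψ hψ _ _ hδ q (by simp only [hAdef, Set.mem_setOf_eq] at hq; linarith)
      simp [hχp, h1]
    · rw [Set.indicator_of_notMem hq]
      exact mul_nonneg (hg q) (bump_nonneg _ _ _ _ _)
  have I2 : ∀ q, χp q ≤ A.indicator (fun q => g q) q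
      + (Sp δ).indicator (fun _ => ‖g‖) q := by
    intro q
    by_cases hq : q ∈ A
    · rw [Set.indicator_of_mem hq]
      have h1 : χp q ≤ g q := by
        have := bump_le_one ψ hψ (lam - δ) δ q
        have h2 := bump_nonneg ψ hψ (lam - δ) δ q
        calc χp q = g q * bump ψ hψ (lam - δ) δ q := rfl
          _ ≤ g q * 1 := mul_le_mul_of_nonneg_left this (hg q)
          _ = g q := mul_one _
      have h3 : (0:ℝ) ≤ (Sp δ).indicator (fun _ => ‖g‖) q :=
        Set.indicator_nonneg (fun _ _ => hGnn) q
      linarith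
    · rw [Set.indicator_of_notMem hq]
      simp only [hAdef, Set.mem_setOf_eq, not_lt] at hq
      by_cases hq2 : ψ q ≤ lam - δ
      · have h1 : bump ψ hψ (lam - δ) δ q = 0 := bump_eq_zero ψ hψ _ _ hδ q hq2
        have h3 : (0:ℝ) ≤ (Sp δ).indicator (fun _ => ‖g‖) q :=
          Set.indicator_nonneg (fun _ _ => hGnn) q
        simp only [hχp, BoundedContinuousFunction.mul_apply, h1, mul_zero]
        linarith
      · push_neg at hq2
        have hmem : q ∈ Sp δ := ⟨hq2, hq⟩
        rw [Set.indicator_of_mem hmem]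
        calc χp q = g q * bump ψ hψ (lam - δ) δ q := rfl
          _ ≤ g q * 1 := mul_le_mul_of_nonneg_left (bump_le_one _ _ _ _ _) (hg q)
          _ = g q := mul_one _
          _ ≤ ‖g‖ := by
              have := g.norm_coe_le_norm q
              exact le_trans (le_abs_self _) this
          _ ≤ 0 + ‖g‖ := by linarith
  have I3 : ∀ q, χm q ≤ A.indicator (fun q => g q) q := by
    intro q
    by_cases hq : q ∈ A
    · rw [Set.indicator_of_mem hq]
      calc χm q = g q * bump ψ hψ lam δ q := rfl
        _ ≤ g q * 1 := mul_le_mul_of_nonneg_left (bump_le_one _ _ _ _ _) (hg q)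
        _ = g q := mul_one _
    · rw [Set.indicator_of_notMem hq]
      simp only [hAdef, Set.mem_setOf_eq, not_lt] at hq
      have h1 : bump ψ hψ lam δ q = 0 := bump_eq_zero ψ hψ _ _ hδ q hq
      simp [hχm, h1]
  have I4 : ∀ q, A.indicator (fun q => g q) q ≤ χm q
      + (Sm δ).indicator (fun _ => ‖g‖) q := by
    intro q
    have hχmnn : 0 ≤ χm q := mul_nonneg (hg q) (bump_nonneg _ _ _ _ _)
    by_cases hq : q ∈ A
    · rw [Set.indicator_of_mem hq]
      simp only [hAdef, Set.mem_setOf_eq] at hq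
      by_cases hq2 : lam + δ ≤ ψ q
      · have h1 : bump ψ hψ lam δ q = 1 := bump_eq_one ψ hψ _ _ hδ q hq2
        have h3 : (0:ℝ) ≤ (Sm δ).indicator (fun _ => ‖g‖) q :=
          Set.indicator_nonneg (fun _ _ => hGnn) q
        have : χm q = g q := by simp [hχm, h1]
        linarith
      · push_neg at hq2
        have hmem : q ∈ Sm δ := ⟨hq, hq2⟩
        rw [Set.indicator_of_mem hmem]
        have h4 : g q ≤ ‖g‖ := le_trans (le_abs_self _) (g.norm_coe_le_norm q)
        linarith
    · rw [Set.indicator_of_notMem hq]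
      have h3 : (0:ℝ) ≤ (Sm δ).indicator (fun _ => ‖g‖) q :=
        Set.indicator_nonneg (fun _ _ => hGnn) q
      linarith
  -- integrability
  have hint : ∀ m : Measure E, IsFiniteMeasure m →
      Integrable (A.indicator (fun q => g q)) m ∧ Integrable (⇑χp) m ∧
      Integrable (⇑χm) m ∧ Integrable ((Sp δ).indicator (fun _ => ‖g‖)) m ∧
      Integrable ((Sm δ).indicator (fun _ => ‖g‖)) m := by
    intro m hm
    exact ⟨(g.integrable m).indicator hA, χp.integrable m, χm.integrable m,
      (integrable_const _).indicator (hSpm δ), (integrable_const _).indicator (hSmm δ)⟩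
  -- ν-side inequalities
  obtain ⟨hνA, hνp, hνm, hνSp, hνSm⟩ := hint ν inferInstance
  have hE2 : ∫ q, χp q ∂ν ≤ I + ‖g‖ * (ν (Sp δ)).toReal := by
    have := integral_mono hνp (hνA.add hνSp) I2
    simp only [Pi.add_apply] at this
    rw [integral_add hνA hνSp, integral_indicator_const _ (hSpm δ)] at this
    simpa [smul_eq_mul, mul_comm, hI, measureReal_def] using this
  have hE4 : I ≤ ∫ q, χm q ∂ν + ‖g‖ * (ν (Sm δ)).toReal := by
    have := integral_mono hνA (hνm.add hνSm) I4
    simp only [Pi.add_apply] at this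
    rw [integral_add hνm hνSm, integral_indicator_const _ (hSmm δ)] at this
    simpa [smul_eq_mul, mul_comm, hI, measureReal_def] using this
  -- convergence of the two continuous test integrals
  have hwp := (hw χp).eventually (Metric.ball_mem_nhds _ (by positivity : (0:ℝ) < ε/4))
  have hwm := (hw χm).eventually (Metric.ball_mem_nhds _ (by positivity : (0:ℝ) < ε/4))
  filter_upwards [hwp, hwm] with t htp htm
  haveI := hfin t
  obtain ⟨hμA, hμp, hμm, hμSp, hμSm⟩ := hint (μ t) inferInstance
  have hF1 : ∫ q, A.indicator (fun q => g q) q ∂(μ t) ≤ ∫ q, χp q ∂(μ t) :=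
    integral_mono hμA hμp I1
  have hF3 : ∫ q, χm q ∂(μ t) ≤ ∫ q, A.indicator (fun q => g q) q ∂(μ t) :=
    integral_mono hμm hμA I3
  simp only [Metric.mem_ball, Real.dist_eq] at htp htm ⊢
  have h1 : |∫ q, χp q ∂(μ t) - ∫ q, χp q ∂ν| < ε / 4 := htp
  have h2 : |∫ q, χm q ∂(μ t) - ∫ q, χm q ∂ν| < ε / 4 := htm
  rw [abs_sub_lt_iff] at h1 h2 ⊢
  constructor
  · calc ∫ q, A.indicator (fun q => g q) q ∂(μ t) - I
        ≤ ∫ q, χp q ∂(μ t) - I := by linarith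
      _ < ∫ q, χp q ∂ν + ε/4 - I := by linarith [h1.1]
      _ ≤ I + ‖g‖ * (ν (Sp δ)).toReal + ε/4 - I := by linarith
      _ < ε := by linarith [hn.1]
  · calc I - ∫ q, A.indicator (fun q => g q) q ∂(μ t)
        ≤ I - ∫ q, χm q ∂(μ t) := by linarith
      _ < I - (∫ q, χm q ∂ν - ε/4) := by linarith [h2.2]
      _ ≤ ‖g‖ * (ν (Sm δ)).toReal + ε/4 := by linarith
      _ < ε := by linarith [hn.2]

lemma claimA (μ : ℝ → Measure E) (ν : Measure E) [IsFiniteMeasure ν]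
    (hfin : ∀ t, IsProbabilityMeasure (μ t)) (hw : TendstoWeakly μ ν)
    (ψ : E → ℝ) (hψ : Continuous ψ) (lam : ℝ)
    (hatom : ν {q | ψ q = lam} = 0)
    (g : BoundedContinuousFunction E ℝ) :
    Tendsto (fun t => ∫ q, ({q | lam < ψ q}).indicator (fun q => g q) q ∂(μ t)) atTop
      (𝓝 (∫ q, ({q | lam < ψ q}).indicator (fun q => g q) q ∂ν)) := by
  have hA : MeasurableSet {q | lam < ψ q} :=
    measurableSet_lt measurable_const hψ.measurable
  set A := {q | lam < ψ q}
  set g1 : BoundedContinuousFunction E ℝ := g + BoundedContinuousFunction.const E ‖g‖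
    with hg1
  set g2 : BoundedContinuousFunction E ℝ := BoundedContinuousFunction.const E ‖g‖ with hg2
  have hg1nn : ∀ q, 0 ≤ g1 q := by
    intro q
    have habs : |g q| ≤ ‖g‖ := g.norm_coe_le_norm q
    have hq : g1 q = g q + ‖g‖ := rfl
    rw [hq]
    linarith [abs_le.mp habs]
  have hg2nn : ∀ q, 0 ≤ g2 q := by
    intro q
    simp only [hg2, BoundedContinuousFunction.const_apply]
    exact norm_nonneg g
  have h1 := claimA_nonneg μ ν hfin hw ψ hψ lam hatom g1 hg1nn
  have h2 := claimA_nonneg μ ν hfin hw ψ hψ lam hatom g2 hg2nn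
  have hsplit : ∀ m : Measure E, IsFiniteMeasure m →
      ∫ q, A.indicator (fun q => g q) q ∂m
        = (∫ q, A.indicator (fun q => g1 q) q ∂m) - ∫ q, A.indicator (fun q => g2 q) q ∂m := by
    intro m hm
    rw [← integral_sub ((g1.integrable m).indicator hA) ((g2.integrable m).indicator hA)]
    congr 1
    funext q
    by_cases hq : q ∈ A
    · simp [Set.indicator_of_mem hq, hg1, hg2]
    · simp [Set.indicator_of_notMem hq]
  have hres := h1.sub h2
  have hmain : Tendsto (fun t => ∫ q, A.indicator (fun q => g q) q ∂(μ t)) atTop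
      (𝓝 ((∫ q, A.indicator (fun q => g1 q) q ∂ν) - ∫ q, A.indicator (fun q => g2 q) q ∂ν)) := by
    refine hres.congr fun t => ?_
    haveI := hfin t
    exact (hsplit (μ t) inferInstance).symm
  rw [hsplit ν inferInstance]
  exact hmain

end RTaux4

namespace RTaux5

lemma integrable_of_le_const {Ω : Type*} [MeasurableSpace Ω] {μ : Measure Ω}
    [IsFiniteMeasure μ] {f : Ω → ℝ} (hf : AEStronglyMeasurable f μ) (C : ℝ)
    (h : ∀ ω, |f ω| ≤ C) : Integrable f μ :=
  Integrable.mono' (integrable_const C) hf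
    (Filter.Eventually.of_forall (by simpa [Real.norm_eq_abs] using h))

lemma integral_map_cond {Ω : Type*} [MeasureSpace Ω] [IsProbabilityMeasure (ℙ : Measure Ω)]
    {E : Type*} [MeasurableSpace E] (T : Ω → E) (hT : Measurable T)
    (s : Set Ω) (hs : MeasurableSet s) (f : E → ℝ)
    (hf : AEStronglyMeasurable f (Measure.map T ℙ[|s])) :
    ∫ x, f x ∂(Measure.map T (ℙ[|s]))
      = (ℙ s).toReal⁻¹ * ∫ ω, s.indicator (fun ω => f (T ω)) ω ∂ℙ := by
  rw [integral_map hT.aemeasurable hf]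
  rw [ProbabilityTheory.cond, integral_smul_measure, ← integral_indicator hs,
    ENNReal.toReal_inv, smul_eq_mul]

end RTaux5

/-- **Rescaling an unbounded target, part 2 (converse).**
If `|Y| ≤ M` a.s., `t ↦ P(‖X‖ > t)` is regularly varying with index `α > 0` and the
conditional law of `(t⁻¹X, Y)` given `‖X‖ > t` converges weakly to a probability
distribution `P_∞` on `{(x,y) : ‖x‖ > 1}`, then `(X, Z)` with `Z = Y‖X‖` is regularly
varying in `ℝ^{d+1}`: the conditional law of `t⁻¹(X,Z)` given `‖(X,Z)‖ > t` converges
weakly to a probability distribution supported on `{(x,z) : ‖(x,z)‖ > 1}`. -/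
theorem rescaled_target_converse_regular_variation
    {Ω : Type*} [MeasureSpace Ω] [IsProbabilityMeasure (ℙ : Measure Ω)] {d : ℕ}
    (X : Ω → (Fin d → ℝ)) (Y : Ω → ℝ)
    (hXmeas : Measurable X) (hYmeas : Measurable Y)
    (hX0 : ℙ {ω | X ω = 0} = 0)
    (Nd : (Fin d → ℝ) → ℝ) (N1 : ((Fin d → ℝ) × ℝ) → ℝ)
    (hNd : IsNormFun Nd) (hN1 : IsNormFun N1)
    (hbasis : ∀ i, Nd (Pi.single i 1) = 1) (hbasis1 : N1 (0, 1) = 1)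
    (hcompat : ∀ x, N1 (x, 0) = Nd x)
    (M : ℝ) (hM : 0 < M) (hbound : ∀ᵐ ω ∂ℙ, |Y ω| ≤ M)
    (α : ℝ) (hα : 0 < α)
    (hRV : SurvivalRegVarying (fun ω => Nd (X ω)) α)
    (Pinf : Measure ((Fin d → ℝ) × ℝ)) [IsProbabilityMeasure Pinf]
    (hsupp : Pinf {q | ¬ 1 < Nd q.1} = 0)
    (hconv : TendstoWeakly
      (fun t => Measure.map (fun ω => (t⁻¹ • X ω, Y ω)) (ℙ[|{ω | t < Nd (X ω)}]))
      Pinf) :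
    ∃ Qinf : Measure ((Fin d → ℝ) × ℝ), IsProbabilityMeasure Qinf ∧
      Qinf {q | ¬ 1 < N1 q} = 0 ∧
      TendstoWeakly
        (fun t => Measure.map
          (fun ω => t⁻¹ • (X ω, Y ω * Nd (X ω)))
          (ℙ[|{ω | t < N1 (X ω, Y ω * Nd (X ω))}]))
        Qinf := by
  classical
  -- dimension is positive
  rcases Nat.eq_zero_or_pos d with hd0 | hd1
  · exfalso
    subst hd0
    have huniv : {ω | X ω = 0} = Set.univ := by
      ext ω; simp [Subsingleton.elim (X ω) 0]
    rw [huniv, measure_univ] at hX0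
    exact one_ne_zero hX0
  have hdR : (1:ℝ) ≤ d := by exact_mod_cast hd1
  -- continuous norms
  have hNdcont : Continuous Nd := RTaux2.nd_continuous hNd hbasis
  have hN1cont : Continuous N1 :=
    RTaux2.n1_continuous hNd hbasis hN1 hbasis1 hcompat
  -- the key maps
  set φ : (Fin d → ℝ) × ℝ → (Fin d → ℝ) × ℝ := fun q => (q.1, q.2 * Nd q.1) with hφdef
  set ψ : (Fin d → ℝ) × ℝ → ℝ := fun q => N1 (φ q) with hψdef
  have hφcont : Continuous φ := by
    refine continuous_fst.prodMk (continuous_snd.mul (hNdcont.comp continuous_fst))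
  have hψcont : Continuous ψ := hN1cont.comp hφcont
  have hφmeas : Measurable φ := hφcont.measurable
  -- lower bound for N1
  obtain ⟨c, hc, hclow⟩ := RTaux2.n1_lower hN1 hN1cont
  have hc₁ : (0:ℝ) < c / d := by positivity
  set c₁ : ℝ := c / d with hc₁def
  have hψlow : ∀ q, c₁ * Nd q.1 ≤ ψ q := by
    intro q
    have h1 : c * ‖(q.1, q.2 * Nd q.1)‖ ≤ ψ q := hclow _
    have h2 : ‖q.1‖ ≤ ‖((q.1, q.2 * Nd q.1) : (Fin d → ℝ) × ℝ)‖ :=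
      norm_fst_le ((q.1, q.2 * Nd q.1) : (Fin d → ℝ) × ℝ)
    have h3 : Nd q.1 ≤ d * ‖q.1‖ := RTaux2.nd_le_card_norm hNd hbasis q.1
    have hd0 : (0:ℝ) < d := by linarith
    rw [hc₁def, div_mul_eq_mul_div, div_le_iff₀ hd0]
    calc c * Nd q.1 ≤ c * (d * ‖q.1‖) := by
          exact mul_le_mul_of_nonneg_left h3 hc.le
      _ = (c * ‖q.1‖) * d := by ring
      _ ≤ (c * ‖(q.1, q.2 * Nd q.1)‖) * d := by
          have := mul_le_mul_of_nonneg_left h2 hc.le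
          nlinarith
      _ ≤ ψ q * d := by nlinarith
  have hψub : ∀ q, ψ q ≤ (1 + |q.2|) * Nd q.1 := by
    intro q
    have h1 : ψ q ≤ Nd q.1 + |q.2 * Nd q.1| :=
      RTaux2.n1_le hN1 hbasis1 hcompat q.1 (q.2 * Nd q.1)
    have h2 : |q.2 * Nd q.1| = |q.2| * Nd q.1 := by
      rw [abs_mul, abs_of_nonneg (RTaux.normFun_nonneg hNd q.1)]
    rw [h2] at h1
    linarith [h1]
  have hNdnn : ∀ x, 0 ≤ Nd x := RTaux.normFun_nonneg hNd
  -- homogeneity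
  have hφhom : ∀ (s : ℝ), 0 < s → ∀ x y, φ (s⁻¹ • x, y) = s⁻¹ • φ (x, y) := by
    intro s hs x y
    have hNds : Nd (s⁻¹ • x) = s⁻¹ * Nd x := by
      rw [hNd.2.1, abs_of_pos (by positivity)]
    simp only [hφdef, Prod.smul_mk, smul_eq_mul]
    rw [hNds]
    have : y * (s⁻¹ * Nd x) = s⁻¹ * (y * Nd x) := by ring
    rw [this]
  have hψhom : ∀ (s : ℝ), 0 < s → ∀ x y, ψ (s⁻¹ • x, y) = s⁻¹ * ψ (x, y) := by
    intro s hs x y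
    show N1 (φ (s⁻¹ • x, y)) = s⁻¹ * N1 (φ (x, y))
    rw [hφhom s hs x y, hN1.2.1, abs_of_pos (by positivity)]
  -- measurability of the radial variables
  have hRmeas : Measurable (fun ω => Nd (X ω)) := hNdcont.measurable.comp hXmeas
  have hWmeas : Measurable (fun ω => ψ (X ω, Y ω)) :=
    hψcont.measurable.comp (hXmeas.prodMk hYmeas)
  have hRset : ∀ t : ℝ, MeasurableSet {ω | t < Nd (X ω)} := fun t =>
    measurableSet_lt measurable_const hRmeas
  have hWset : ∀ t : ℝ, MeasurableSet {ω | t < ψ (X ω, Y ω)} := fun t =>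
    measurableSet_lt measurable_const hWmeas
  -- positivity of tails
  have hupos : ∀ t : ℝ, ℙ {ω | t < Nd (X ω)} ≠ 0 := by
    by_contra hcon
    push_neg at hcon
    obtain ⟨t₀, ht₀⟩ := hcon
    have h2 := hRV 2 two_pos
    have hev : (fun t => (ℙ {ω | t * 2 < Nd (X ω)}).toReal /
        (ℙ {ω | t < Nd (X ω)}).toReal) =ᶠ[atTop] (fun _ => (0:ℝ)) := by
      filter_upwards [eventually_ge_atTop t₀] with t ht
      have hsub : {ω | t < Nd (X ω)} ⊆ {ω | t₀ < Nd (X ω)} := fun ω hω => by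
        simp only [Set.mem_setOf_eq] at hω ⊢; linarith
      have h0 : ℙ {ω | t < Nd (X ω)} = 0 := measure_mono_null hsub ht₀
      rw [h0]
      simp
    have h3 : Tendsto (fun _ : ℝ => (0:ℝ)) atTop (𝓝 ((2:ℝ) ^ (-α))) :=
      h2.congr' hev
    have h4 : (2:ℝ) ^ (-α) = (0:ℝ) := tendsto_nhds_unique h3 tendsto_const_nhds
    have h5 : (0:ℝ) < (2:ℝ) ^ (-α) := Real.rpow_pos_of_pos two_pos _
    linarith
  have hvpos : ∀ t : ℝ, ℙ {ω | t < ψ (X ω, Y ω)} ≠ 0 := by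
    intro t
    have hsub : {ω | t / c₁ < Nd (X ω)} ⊆ {ω | t < ψ (X ω, Y ω)} := by
      intro ω hω
      simp only [Set.mem_setOf_eq] at hω ⊢
      have h1 := hψlow (X ω, Y ω)
      have h2 : t < c₁ * Nd (X ω) := by
        rw [div_lt_iff₀ hc₁] at hω
        linarith [hω]
      linarith
    intro h0
    exact hupos (t / c₁) (measure_mono_null hsub h0)
  -- choose a non-atom level lam > 1 + M
  obtain ⟨lam, hlamgt, hatom⟩ :
      ∃ lam : ℝ, 1 + M < lam ∧ Pinf {q | ψ q = lam} = 0 := by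
    have hctbl : Set.Countable {r : ℝ | 0 < Pinf {q | ψ q = r}} :=
      Measure.countable_meas_level_set_pos hψcont.measurable
    have hIoi : ¬ (Set.Ioi (1 + M)).Countable := by
      intro h
      have h1 := Cardinal.le_aleph0_iff_set_countable.mpr h
      rw [Cardinal.mk_Ioi_real] at h1
      exact absurd h1 (not_le.mpr Cardinal.aleph0_lt_continuum)
    have hne : (Set.Ioi (1 + M) \ {r : ℝ | 0 < Pinf {q | ψ q = r}}).Nonempty := by
      rw [Set.nonempty_iff_ne_empty]
      intro h
      rw [Set.diff_eq_empty] at h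
      exact hIoi (hctbl.mono h)
    obtain ⟨lam, hmem, hnot⟩ := hne
    refine ⟨lam, hmem, ?_⟩
    by_contra h
    exact hnot (zero_lt_iff.mpr h)
  have hlampos : (0:ℝ) < lam := by linarith
  -- the limit event
  set A : Set ((Fin d → ℝ) × ℝ) := {q | lam < ψ q} with hAdef
  have hAmeas : MeasurableSet A := measurableSet_lt measurable_const hψcont.measurable
  -- probability measures along the way
  haveI hcondP : ∀ t : ℝ, IsProbabilityMeasure (ℙ[|{ω | t < Nd (X ω)}]) := fun t =>
    cond_isProbabilityMeasure (hupos t)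
  have hfinμ : ∀ t : ℝ, IsProbabilityMeasure
      (Measure.map (fun ω => (t⁻¹ • X ω, Y ω)) (ℙ[|{ω | t < Nd (X ω)}])) := fun t =>
    Measure.isProbabilityMeasure_map ((hXmeas.const_smul t⁻¹).prodMk hYmeas).aemeasurable
  -- positivity of the limit event
  have hpA : Pinf A ≠ 0 := by
    set β : ℝ := max (lam / c₁) 1 with hβdef
    have hβ1 : (1:ℝ) ≤ β := le_max_right _ _
    have hβpos : (0:ℝ) < β := by linarith
    have hsubA : {q : (Fin d → ℝ) × ℝ | β < Nd q.1} ⊆ A := by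
      intro q hq
      simp only [Set.mem_setOf_eq] at hq
      have h1 : lam / c₁ ≤ β := le_max_left _ _
      have h2 : lam < c₁ * Nd q.1 := by
        have h3 : lam / c₁ < Nd q.1 := lt_of_le_of_lt h1 hq
        rw [div_lt_iff₀ hc₁] at h3
        linarith
      exact lt_of_lt_of_le h2 (hψlow q)
    set θ := RTaux3.bump (fun q : (Fin d → ℝ) × ℝ => Nd q.1)
      (hNdcont.comp continuous_fst) β β with hθdef
    have hmeasβ : MeasurableSet {q : (Fin d → ℝ) × ℝ | β < Nd q.1} :=
      measurableSet_lt measurable_const (hNdcont.comp continuous_fst).measurable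
    have hθle : ∀ q, θ q ≤ Set.indicator {q : (Fin d → ℝ) × ℝ | β < Nd q.1}
        (fun _ => (1:ℝ)) q := by
      intro q
      by_cases hq : q ∈ {q : (Fin d → ℝ) × ℝ | β < Nd q.1}
      · rw [Set.indicator_of_mem hq]
        exact RTaux3.bump_le_one _ _ _ _ q
      · rw [Set.indicator_of_notMem hq]
        simp only [Set.mem_setOf_eq, not_lt] at hq
        rw [RTaux3.bump_eq_zero _ _ _ _ hβpos q hq]
    have hθint_le : ∫ q, θ q ∂Pinf ≤ (Pinf {q : (Fin d → ℝ) × ℝ | β < Nd q.1}).toReal := by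
      have h1 := integral_mono (θ.integrable Pinf)
        ((integrable_const (1:ℝ)).indicator hmeasβ) hθle
      rwa [integral_indicator_const (1:ℝ) hmeasβ, smul_eq_mul, mul_one] at h1
    have hratio := hRV (2 * β) (by positivity)
    have hθlim := hconv θ
    have hev : ∀ᶠ t in atTop,
        (ℙ {ω | t * (2 * β) < Nd (X ω)}).toReal / (ℙ {ω | t < Nd (X ω)}).toReal
          ≤ ∫ q, θ q ∂(Measure.map (fun ω => (t⁻¹ • X ω, Y ω)) (ℙ[|{ω | t < Nd (X ω)}])) := by
      filter_upwards [eventually_ge_atTop (1:ℝ)] with t ht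
      have ht0 : (0:ℝ) < t := lt_of_lt_of_le one_pos ht
      have hT : Measurable (fun ω => (t⁻¹ • X ω, Y ω)) :=
        (hXmeas.const_smul t⁻¹).prodMk hYmeas
      rw [RTaux5.integral_map_cond _ hT _ (hRset t) _ θ.continuous.aestronglyMeasurable]
      have hptwise : ∀ ω, Set.indicator {ω | t * (2 * β) < Nd (X ω)} (fun _ => (1:ℝ)) ω
          ≤ Set.indicator {ω | t < Nd (X ω)} (fun ω => θ (t⁻¹ • X ω, Y ω)) ω := by
        intro ω
        by_cases hω' : ω ∈ {ω | t * (2 * β) < Nd (X ω)}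
        · have hω : t * (2 * β) < Nd (X ω) := hω'
          rw [Set.indicator_of_mem hω']
          have hmem1 : ω ∈ {ω | t < Nd (X ω)} := by
            simp only [Set.mem_setOf_eq]
            nlinarith
          rw [Set.indicator_of_mem hmem1]
          have hNdt : Nd (t⁻¹ • X ω) = t⁻¹ * Nd (X ω) := by
            rw [hNd.2.1, abs_of_pos (by positivity)]
          have h2β : β + β ≤ Nd ((t⁻¹ • X ω, Y ω).1) := by
            show β + β ≤ Nd (t⁻¹ • X ω)
            rw [hNdt]
            rw [← mul_le_mul_iff_right₀ ht0]
            calc t * (β + β) = t * (2 * β) := by ring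
              _ ≤ Nd (X ω) := hω.le
              _ = t * (t⁻¹ * Nd (X ω)) := by field_simp
          rw [RTaux3.bump_eq_one (fun q : (Fin d → ℝ) × ℝ => Nd q.1)
            (hNdcont.comp continuous_fst) β β hβpos (t⁻¹ • X ω, Y ω) h2β]
        · rw [Set.indicator_of_notMem hω']
          exact Set.indicator_nonneg
            (fun ω _ => RTaux3.bump_nonneg _ _ _ _ _) ω
      have hint1 : Integrable
          (Set.indicator {ω | t < Nd (X ω)} (fun ω => θ (t⁻¹ • X ω, Y ω))) ℙ := by
        refine Integrable.indicator ?_ (hRset t)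
        refine RTaux5.integrable_of_le_const
          ((θ.continuous.measurable.comp hT).aestronglyMeasurable) ‖θ‖ ?_
        intro ω
        exact θ.norm_coe_le_norm _
      have h2 := integral_mono
        ((integrable_const (1:ℝ)).indicator (hRset (t * (2 * β)))) hint1 hptwise
      rw [integral_indicator_const (1:ℝ) (hRset (t * (2 * β))), smul_eq_mul, mul_one] at h2
      rw [div_eq_inv_mul]
      exact mul_le_mul_of_nonneg_left h2 (inv_nonneg.mpr ENNReal.toReal_nonneg)
    have hlow : (2 * β) ^ (-α) ≤ ∫ q, θ q ∂Pinf :=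
      le_of_tendsto_of_tendsto hratio hθlim hev
    intro h0
    have hβ0 : Pinf {q : (Fin d → ℝ) × ℝ | β < Nd q.1} = 0 :=
      measure_mono_null hsubA h0
    rw [hβ0] at hθint_le
    simp only [ENNReal.toReal_zero] at hθint_le
    have hpow : (0:ℝ) < (2 * β) ^ (-α) := Real.rpow_pos_of_pos (by positivity) _
    linarith
  have hpApos : 0 < (Pinf A).toReal :=
    ENNReal.toReal_pos hpA (measure_ne_top _ _)
  -- claim A instances
  have hKeyA : ∀ g : BoundedContinuousFunction ((Fin d → ℝ) × ℝ) ℝ,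
      Tendsto (fun t => ∫ q, A.indicator (fun q => g q) q
          ∂(Measure.map (fun ω => (t⁻¹ • X ω, Y ω)) (ℙ[|{ω | t < Nd (X ω)}]))) atTop
        (𝓝 (∫ q, A.indicator (fun q => g q) q ∂Pinf)) := fun g =>
    RTaux4.claimA _ Pinf hfinμ hconv ψ hψcont lam hatom g
  -- the limit measure
  set Qinf : Measure ((Fin d → ℝ) × ℝ) :=
    ((Pinf A)⁻¹ : ℝ≥0∞) • Measure.map (fun q => lam⁻¹ • φ q) (Pinf.restrict A) with hQdef
  have hmapmeas : Measurable (fun q : (Fin d → ℝ) × ℝ => lam⁻¹ • φ q) :=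
    (hφcont.const_smul lam⁻¹).measurable
  refine ⟨Qinf, ?_, ?_, ?_⟩
  · -- probability measure
    refine ⟨?_⟩
    rw [hQdef]
    simp only [Measure.smul_apply, smul_eq_mul]
    rw [Measure.map_apply hmapmeas MeasurableSet.univ, Set.preimage_univ,
      Measure.restrict_apply_univ]
    exact ENNReal.inv_mul_cancel hpA (measure_ne_top _ _)
  · -- support
    have hBmeas : MeasurableSet {q : (Fin d → ℝ) × ℝ | ¬ 1 < N1 q} := by
      have hBeq : {q : (Fin d → ℝ) × ℝ | ¬ 1 < N1 q} = {q | N1 q ≤ 1} := by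
        ext q; simp [not_lt]
      rw [hBeq]
      exact measurableSet_le hN1cont.measurable measurable_const
    rw [hQdef]
    simp only [Measure.smul_apply, smul_eq_mul]
    rw [Measure.map_apply hmapmeas hBmeas, Measure.restrict_apply (hmapmeas hBmeas)]
    have hempty : (fun q => lam⁻¹ • φ q) ⁻¹' {q : (Fin d → ℝ) × ℝ | ¬ 1 < N1 q} ∩ A
        = ∅ := by
      ext q
      simp only [Set.mem_inter_iff, Set.mem_preimage, Set.mem_setOf_eq,
        Set.mem_empty_iff_false, iff_false, not_and]
      intro hpre hA'
      apply hpre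
      have h1 : N1 (lam⁻¹ • φ q) = lam⁻¹ * ψ q := by
        rw [hN1.2.1, abs_of_pos (by positivity)]
      rw [h1]
      have h2 : lam < ψ q := hA'
      calc (1:ℝ) = lam⁻¹ * lam := by field_simp
        _ < lam⁻¹ * ψ q := by
            exact mul_lt_mul_of_pos_left h2 (by positivity)
    rw [hempty]
    simp
  · -- weak convergence
    intro f
    set gf : BoundedContinuousFunction ((Fin d → ℝ) × ℝ) ℝ :=
      f.compContinuous ⟨fun q => lam⁻¹ • φ q, hφcont.const_smul lam⁻¹⟩ with hgfdef
    have hgfcoe : (fun q => gf q) = (fun q => f (lam⁻¹ • φ q)) := rfl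
    have hNum : Tendsto (fun t : ℝ => ∫ q, A.indicator (fun q => gf q) q
        ∂(Measure.map (fun ω => ((t / lam)⁻¹ • X ω, Y ω)) (ℙ[|{ω | t / lam < Nd (X ω)}])))
        atTop (𝓝 (∫ q, A.indicator (fun q => gf q) q ∂Pinf)) :=
      (hKeyA gf).comp (Tendsto.atTop_div_const hlampos tendsto_id)
    have hDen : Tendsto (fun t : ℝ => ∫ q,
        A.indicator (fun q => (1 : BoundedContinuousFunction ((Fin d → ℝ) × ℝ) ℝ) q) q
        ∂(Measure.map (fun ω => ((t / lam)⁻¹ • X ω, Y ω)) (ℙ[|{ω | t / lam < Nd (X ω)}])))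
        atTop (𝓝 (∫ q,
          A.indicator (fun q => (1 : BoundedContinuousFunction ((Fin d → ℝ) × ℝ) ℝ) q) q
          ∂Pinf)) :=
      (hKeyA 1).comp (Tendsto.atTop_div_const hlampos tendsto_id)
    have hIA : ∫ q,
        A.indicator (fun q => (1 : BoundedContinuousFunction ((Fin d → ℝ) × ℝ) ℝ) q) q ∂Pinf
        = (Pinf A).toReal := by
      have h1 : (fun q => A.indicator
          (fun q => (1 : BoundedContinuousFunction ((Fin d → ℝ) × ℝ) ℝ) q) q)
          = fun q => A.indicator (fun _ => (1:ℝ)) q := rfl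
      rw [h1, integral_indicator_const (1:ℝ) hAmeas, smul_eq_mul, mul_one, measureReal_def]
    have hIAne : (Pinf A).toReal ≠ 0 := ne_of_gt hpApos
    have hQint : ∫ x, f x ∂Qinf
        = (∫ q, A.indicator (fun q => gf q) q ∂Pinf) / (Pinf A).toReal := by
      rw [hQdef, integral_smul_measure,
        integral_map hmapmeas.aemeasurable f.continuous.aestronglyMeasurable,
        ENNReal.toReal_inv, smul_eq_mul, ← integral_indicator hAmeas,
        div_eq_inv_mul, hgfcoe]
    have hdiv := hNum.div hDen (by rw [hIA]; exact hIAne)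
    rw [hIA] at hdiv
    rw [hQint]
    refine Tendsto.congr' ?_ hdiv
    filter_upwards [eventually_gt_atTop (0:ℝ)] with t ht0
    set s : ℝ := t / lam with hsdef
    have hs0 : 0 < s := div_pos ht0 hlampos
    have hst : lam * s = t := by
      rw [hsdef]; field_simp
    have hTt : Measurable (fun ω => t⁻¹ • (X ω, Y ω * Nd (X ω))) :=
      (continuous_const_smul t⁻¹).measurable.comp (hXmeas.prodMk (hYmeas.mul hRmeas))
    have hTs : Measurable (fun ω => (s⁻¹ • X ω, Y ω)) :=
      (hXmeas.const_smul s⁻¹).prodMk hYmeas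
    -- pointwise identity
    have hpt : ∀ (F : (Fin d → ℝ) × ℝ → ℝ) (ω : Ω), |Y ω| ≤ M →
        ({ω | t < N1 (X ω, Y ω * Nd (X ω))}).indicator
          (fun ω => F (t⁻¹ • (X ω, Y ω * Nd (X ω)))) ω
        = ({ω | s < Nd (X ω)}).indicator
          (fun ω => A.indicator (fun q => F (lam⁻¹ • φ q)) (s⁻¹ • X ω, Y ω)) ω := by
      intro F ω hYb
      have hWsX : ψ (s⁻¹ • X ω, Y ω) = s⁻¹ * ψ (X ω, Y ω) := hψhom s hs0 _ _
      have hmemA : ((s⁻¹ • X ω, Y ω) ∈ A) ↔ t < ψ (X ω, Y ω) := by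
        simp only [hAdef, Set.mem_setOf_eq]
        rw [hWsX, inv_mul_eq_div, lt_div_iff₀ hs0, hst]
      have hval : F (lam⁻¹ • φ (s⁻¹ • X ω, Y ω)) = F (t⁻¹ • (X ω, Y ω * Nd (X ω))) := by
        rw [hφhom s hs0, smul_smul, ← mul_inv, hst]
      by_cases hmem : ω ∈ {ω | t < N1 (X ω, Y ω * Nd (X ω))}
      · rw [Set.indicator_of_mem hmem]
        have hW : t < ψ (X ω, Y ω) := hmem
        have hmem2 : ω ∈ {ω | s < Nd (X ω)} := by
          simp only [Set.mem_setOf_eq]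
          have h1 : ψ (X ω, Y ω) ≤ (1 + |Y ω|) * Nd (X ω) := hψub _
          have h2 : (1 + |Y ω|) * Nd (X ω) ≤ lam * Nd (X ω) := by
            apply mul_le_mul_of_nonneg_right _ (hNdnn _)
            linarith
          have h3 : lam * s < lam * Nd (X ω) := by rw [hst]; linarith
          exact lt_of_mul_lt_mul_left h3 hlampos.le
        rw [Set.indicator_of_mem hmem2,
          Set.indicator_of_mem (hmemA.mpr hW), hval]
      · rw [Set.indicator_of_notMem hmem]
        have hW : ¬ t < ψ (X ω, Y ω) := hmem
        by_cases hmem2 : ω ∈ {ω | s < Nd (X ω)}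
        · rw [Set.indicator_of_mem hmem2,
            Set.indicator_of_notMem (fun hh => hW (hmemA.mp hh))]
        · rw [Set.indicator_of_notMem hmem2]
    -- integral identities
    have hInt_f : ∫ ω, ({ω | t < N1 (X ω, Y ω * Nd (X ω))}).indicator
          (fun ω => f (t⁻¹ • (X ω, Y ω * Nd (X ω)))) ω ∂ℙ
        = ∫ ω, ({ω | s < Nd (X ω)}).indicator
          (fun ω => A.indicator (fun q => f (lam⁻¹ • φ q)) (s⁻¹ • X ω, Y ω)) ω ∂ℙ := by
      refine integral_congr_ae ?_
      filter_upwards [hbound] with ω hb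
      exact hpt (⇑f) ω hb
    have hInt_1 : ∫ ω, ({ω | t < N1 (X ω, Y ω * Nd (X ω))}).indicator
          (fun _ => (1:ℝ)) ω ∂ℙ
        = ∫ ω, ({ω | s < Nd (X ω)}).indicator
          (fun ω => A.indicator (fun _ => (1:ℝ)) (s⁻¹ • X ω, Y ω)) ω ∂ℙ := by
      refine integral_congr_ae ?_
      filter_upwards [hbound] with ω hb
      exact hpt (fun _ => (1:ℝ)) ω hb
    -- unfold the four conditional integrals
    have hLHSf : ∫ x, f x ∂(Measure.map (fun ω => t⁻¹ • (X ω, Y ω * Nd (X ω)))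
          (ℙ[|{ω | t < N1 (X ω, Y ω * Nd (X ω))}]))
        = (ℙ {ω | t < N1 (X ω, Y ω * Nd (X ω))}).toReal⁻¹
          * ∫ ω, ({ω | t < N1 (X ω, Y ω * Nd (X ω))}).indicator
              (fun ω => f (t⁻¹ • (X ω, Y ω * Nd (X ω)))) ω ∂ℙ :=
      RTaux5.integral_map_cond _ hTt _ (hWset t) _ f.continuous.aestronglyMeasurable
    have hLHS1 : ∫ x, (1 : BoundedContinuousFunction ((Fin d → ℝ) × ℝ) ℝ) x
          ∂(Measure.map (fun ω => t⁻¹ • (X ω, Y ω * Nd (X ω)))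
            (ℙ[|{ω | t < N1 (X ω, Y ω * Nd (X ω))}]))
        = (ℙ {ω | t < N1 (X ω, Y ω * Nd (X ω))}).toReal⁻¹
          * ∫ ω, ({ω | t < N1 (X ω, Y ω * Nd (X ω))}).indicator
              (fun _ => (1:ℝ)) ω ∂ℙ :=
      RTaux5.integral_map_cond _ hTt _ (hWset t) _
        (1 : BoundedContinuousFunction ((Fin d → ℝ) × ℝ) ℝ).continuous.aestronglyMeasurable
    have hnums : ∫ q, A.indicator (fun q => gf q) q
          ∂(Measure.map (fun ω => (s⁻¹ • X ω, Y ω)) (ℙ[|{ω | s < Nd (X ω)}]))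
        = (ℙ {ω | s < Nd (X ω)}).toReal⁻¹
          * ∫ ω, ({ω | s < Nd (X ω)}).indicator
              (fun ω => A.indicator (fun q => gf q) (s⁻¹ • X ω, Y ω)) ω ∂ℙ :=
      RTaux5.integral_map_cond _ hTs _ (hRset s) _
        (gf.continuous.stronglyMeasurable.indicator hAmeas).aestronglyMeasurable
    have hdens : ∫ q,
          A.indicator (fun q => (1 : BoundedContinuousFunction ((Fin d → ℝ) × ℝ) ℝ) q) q
          ∂(Measure.map (fun ω => (s⁻¹ • X ω, Y ω)) (ℙ[|{ω | s < Nd (X ω)}]))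
        = (ℙ {ω | s < Nd (X ω)}).toReal⁻¹
          * ∫ ω, ({ω | s < Nd (X ω)}).indicator
              (fun ω => A.indicator (fun _ => (1:ℝ)) (s⁻¹ • X ω, Y ω)) ω ∂ℙ :=
      RTaux5.integral_map_cond _ hTs _ (hRset s) _
        ((1 : BoundedContinuousFunction ((Fin d → ℝ) × ℝ) ℝ).continuous.stronglyMeasurable.indicator
          hAmeas).aestronglyMeasurable
    -- abbreviations
    set u : ℝ := (ℙ {ω | s < Nd (X ω)}).toReal with hudef
    have hu0 : 0 < u := ENNReal.toReal_pos (hupos s) (measure_ne_top _ _)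
    set v : ℝ := (ℙ {ω | t < N1 (X ω, Y ω * Nd (X ω))}).toReal with hvdef
    have hv0 : 0 < v := ENNReal.toReal_pos (hvpos t) (measure_ne_top _ _)
    set num : ℝ := ∫ q, A.indicator (fun q => gf q) q
      ∂(Measure.map (fun ω => (s⁻¹ • X ω, Y ω)) (ℙ[|{ω | s < Nd (X ω)}])) with hnumdef
    set den : ℝ := ∫ q,
      A.indicator (fun q => (1 : BoundedContinuousFunction ((Fin d → ℝ) × ℝ) ℝ) q) q
      ∂(Measure.map (fun ω => (s⁻¹ • X ω, Y ω)) (ℙ[|{ω | s < Nd (X ω)}])) with hdendef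
    -- the common integrals in terms of num and den
    have hCf : ∫ ω, ({ω | s < Nd (X ω)}).indicator
          (fun ω => A.indicator (fun q => f (lam⁻¹ • φ q)) (s⁻¹ • X ω, Y ω)) ω ∂ℙ
        = u * num := by
      rw [hnums, ← mul_assoc, mul_inv_cancel₀ hu0.ne', one_mul, hgfcoe]
    have hC1 : ∫ ω, ({ω | s < Nd (X ω)}).indicator
          (fun ω => A.indicator (fun _ => (1:ℝ)) (s⁻¹ • X ω, Y ω)) ω ∂ℙ
        = u * den := by
      rw [hdens, ← mul_assoc, mul_inv_cancel₀ hu0.ne', one_mul]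
    -- evaluation with f
    have heLHS : ∫ x, f x ∂(Measure.map (fun ω => t⁻¹ • (X ω, Y ω * Nd (X ω)))
          (ℙ[|{ω | t < N1 (X ω, Y ω * Nd (X ω))}]))
        = v⁻¹ * (u * num) := by
      rw [hLHSf, hInt_f, hCf]
    -- evaluation with 1
    haveI hPZcond : IsProbabilityMeasure (ℙ[|{ω | t < N1 (X ω, Y ω * Nd (X ω))}]) :=
      cond_isProbabilityMeasure (hvpos t)
    haveI hPZ : IsProbabilityMeasure (Measure.map (fun ω => t⁻¹ • (X ω, Y ω * Nd (X ω)))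
        (ℙ[|{ω | t < N1 (X ω, Y ω * Nd (X ω))}])) :=
      Measure.isProbabilityMeasure_map hTt.aemeasurable
    have hone : (1:ℝ) = v⁻¹ * (u * den) := by
      have h1 : ∫ x, (1 : BoundedContinuousFunction ((Fin d → ℝ) × ℝ) ℝ) x
          ∂(Measure.map (fun ω => t⁻¹ • (X ω, Y ω * Nd (X ω)))
            (ℙ[|{ω | t < N1 (X ω, Y ω * Nd (X ω))}])) = 1 := by
        simp
      rw [← h1, hLHS1, hInt_1, hC1]
    -- algebra
    have hk : (v⁻¹ * u) * den = 1 := by rw [mul_assoc]; exact hone.symm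
    have hden_ne : den ≠ 0 := by
      intro h
      rw [h, mul_zero] at hk
      exact zero_ne_one hk
    have hkval : v⁻¹ * u = den⁻¹ := by
      have h2 : (v⁻¹ * u) * den * den⁻¹ = 1 * den⁻¹ := by rw [hk]
      rwa [mul_assoc, mul_inv_cancel₀ hden_ne, mul_one, one_mul] at h2
    show num / den = _
    rw [heLHS, div_eq_mul_inv, ← hkval]
    ring
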